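/- Assume the weights ω(·,h) satisfy (A1) and have finite second moment M_2(h) = Σ_α ω(α,h)|x_α|² < ∞. For a bounded domain Ω and R > 0 let Ω_R = RΩ. Then for all R large enough, the first Dirichlet eigenvalue satisfies λ_{h,Ω_R} ≤ C M_2(h) R^{−2}, with C independent of h and R. -/

import Mathlib

open Real Set Pointwise

private lemma auxOuterCard (p q : ℝ) (h0 : 0 ≤ q - p) :
    ((Finset.Icc ⌈p⌉ ⌊q⌋).card : ℝ) ≤ q - p + 1 := by
  rw [Int.card_Icc]
  rcases le_or_gt (⌊q⌋ + 1 - ⌈p⌉) 0 with hz | hz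
  · rw [Int.toNat_of_nonpos hz]; push_cast; linarith
  · have e2 : (((⌊q⌋ + 1 - ⌈p⌉).toNat : ℕ) : ℝ) = ((⌊q⌋ : ℝ) + 1 - (⌈p⌉ : ℝ)) := by
      exact_mod_cast Int.toNat_of_nonneg hz.le
    rw [e2]
    have h1 := Int.le_ceil p
    have h2 := Int.floor_le q
    linarith

private lemma auxInnerCard (p q : ℝ) (h2 : 2 ≤ q - p) :
    q - p - 1 ≤ ((Finset.Icc ⌈p⌉ ⌊q⌋).card : ℝ) ∧ (1:ℝ) ≤ ((Finset.Icc ⌈p⌉ ⌊q⌋).card : ℝ) := by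
  have h1 : (⌈p⌉ : ℝ) < p + 1 := Int.ceil_lt_add_one p
  have h2' : q - 1 < (⌊q⌋ : ℝ) := sub_lt_iff_lt_add.mpr (Int.lt_floor_add_one q)
  have hz : (0:ℤ) ≤ ⌊q⌋ + 1 - ⌈p⌉ := by
    have hx : (0:ℝ) ≤ (⌊q⌋ : ℝ) + 1 - (⌈p⌉ : ℝ) := by linarith
    exact_mod_cast hx
  rw [Int.card_Icc]
  have e2 : (((⌊q⌋ + 1 - ⌈p⌉).toNat : ℕ) : ℝ) = ((⌊q⌋ : ℝ) + 1 - (⌈p⌉ : ℝ)) := by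
    exact_mod_cast Int.toNat_of_nonneg hz
  rw [e2]
  constructor <;> linarith

set_option maxHeartbeats 2000000 in
/-- If the weights satisfy (A1) and have finite second moment `M₂(h)`, then the first
Dirichlet eigenvalue of `-L_h` on the dilated domain `Ω_R = R·Ω` satisfies
`λ_{h,Ω_R} ≤ C M₂(h) R⁻²` for all `R` large enough, with `C` independent of `h` and `R`. -/
theorem stmt7 (N : ℕ) (hN : 0 < N) (Ω : Set (Fin N → ℝ))
    (hΩo : IsOpen Ω) (hΩne : Ω.Nonempty) (hΩb : Bornology.IsBounded Ω) :
    ∃ C > (0 : ℝ), ∀ h : ℝ, 0 < h → ∀ ω : (Fin N → ℤ) → ℝ,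
      (∀ α, ω (-α) = ω α) → (∀ α, 0 ≤ ω α) → ω 0 = 0 →
      Summable ω → 0 < ∑' α, ω α →
      Summable (fun α : Fin N → ℤ => ω α * ∑ i, (h * α i) ^ 2) →
      ∀ lam : ℝ → ℝ,
      (∀ R : ℝ, 0 < R →
        IsLeast {r : ℝ | ∃ φ : (Fin N → ℤ) → ℝ, (Function.support φ).Finite ∧
          (∀ α : Fin N → ℤ, (fun k => h * α k) ∉ R • Ω → φ α = 0) ∧
          h ^ N * ∑' α : Fin N → ℤ, (φ α) ^ 2 = 1 ∧
          r = h ^ N / 2 *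
              ∑' α : Fin N → ℤ, ∑' β : Fin N → ℤ, (φ α - φ β) ^ 2 * ω (α - β)} (lam R)) →
      ∃ R0 : ℝ, ∀ R : ℝ, R0 ≤ R →
        lam R ≤ C * (∑' α : Fin N → ℤ, ω α * ∑ i, (h * α i) ^ 2) / R ^ 2 := by
  obtain ⟨x0, hx0⟩ := hΩne
  obtain ⟨r, hr, hball⟩ := Metric.isOpen_iff.mp hΩo x0 hx0
  refine ⟨4 * 5 ^ N / r ^ 2, by positivity, ?_⟩
  intro h hh ω hsym hnn hω0 hsumω hposω hM2sum lam hlam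
  set W : (Fin N → ℤ) → ℝ := fun α : Fin N → ℤ => ω α * ∑ i, (h * α i) ^ 2 with hWdef
  have hWsum : Summable W := hM2sum
  clear_value W
  have hW0 : ∀ γ, 0 ≤ W γ := by
    intro γ
    simp only [hWdef]
    exact mul_nonneg (hnn γ) (by positivity)
  set M2 : ℝ := ∑' α : Fin N → ℤ, W α with hM2def
  clear_value M2
  have hM2nn : 0 ≤ M2 := by rw [hM2def]; exact tsum_nonneg hW0
  refine ⟨max 1 (2 * h / r), ?_⟩
  intro R hR
  have hR1 : (1:ℝ) ≤ R := le_trans (le_max_left _ _) hR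
  have hRpos : 0 < R := lt_of_lt_of_le one_pos hR1
  have hhr : 2 * h / r ≤ R := le_trans (le_max_right _ _) hR
  have h2h : 2 * h ≤ R * r := by
    rw [div_le_iff₀ hr] at hhr; linarith
  set ρ : ℝ := R * r with hρdef
  clear_value ρ
  have hρ : 0 < ρ := by rw [hρdef]; exact mul_pos hRpos hr
  have h2hρ : 2 * h ≤ ρ := by rw [hρdef]; linarith
  set L : ℝ := ρ / h with hLdef
  clear_value L
  have hL2 : 2 ≤ L := by rw [hLdef, le_div_iff₀ hh]; linarith
  set c : Fin N → ℝ := fun i => R * x0 i with hcdef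
  clear_value c
  -- the tent test function (unnormalized)
  set φ0 : (Fin N → ℤ) → ℝ := fun α => max (ρ - ‖(fun i => h * (α i : ℝ)) - c‖) 0 with hφ0def
  clear_value φ0
  -- outer and inner boxes
  set A : Fin N → ℤ := fun i => ⌈(c i - ρ) / h⌉ with hAdef
  clear_value A
  set B : Fin N → ℤ := fun i => ⌊(c i + ρ) / h⌋ with hBdef
  clear_value B
  set A' : Fin N → ℤ := fun i => ⌈(c i - ρ / 2) / h⌉ with hA'def
  clear_value A'
  set B' : Fin N → ℤ := fun i => ⌊(c i + ρ / 2) / h⌋ with hB'def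
  clear_value B'
  set box : Finset (Fin N → ℤ) := Finset.Icc A B with hboxdef
  clear_value box
  set T : Finset (Fin N → ℤ) := Finset.Icc A' B' with hTdef
  clear_value T
  -- support of φ0 is inside box
  have hmem : ∀ α : Fin N → ℤ, φ0 α ≠ 0 → α ∈ box := by
    intro α hα
    have h1 : ‖(fun i => h * (α i : ℝ)) - c‖ < ρ := by
      by_contra hcon
      push_neg at hcon
      apply hα
      simp only [hφ0def]
      exact max_eq_right (by linarith)
    have h2 : ∀ i, |h * (α i : ℝ) - c i| < ρ := by
      intro i
      have := norm_le_pi_norm ((fun i => h * (α i : ℝ)) - c) i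
      simp only [Pi.sub_apply, Real.norm_eq_abs] at this
      exact lt_of_le_of_lt this h1
    simp only [hboxdef, Finset.mem_Icc, Pi.le_def]
    constructor
    · intro i
      simp only [hAdef]
      apply Int.ceil_le.mpr
      rw [div_le_iff₀ hh]
      have := (abs_lt.mp (h2 i)).1
      nlinarith
    · intro i
      simp only [hBdef]
      apply Int.le_floor.mpr
      rw [le_div_iff₀ hh]
      have := (abs_lt.mp (h2 i)).2
      nlinarith
  have hsupp : ∀ α ∉ box, φ0 α = 0 := by
    intro α hα; by_contra h'; exact hα (hmem α h')
  -- φ0 is at least ρ/2 on T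
  have hT : ∀ α ∈ T, ρ / 2 ≤ φ0 α := by
    intro α hα
    simp only [hTdef, Finset.mem_Icc, Pi.le_def, hA'def, hB'def] at hα
    have h2 : ∀ i, |h * (α i : ℝ) - c i| ≤ ρ / 2 := by
      intro i
      have ha := Int.ceil_le.mp (hα.1 i)
      have hb := Int.le_floor.mp (hα.2 i)
      rw [div_le_iff₀ hh] at ha
      rw [le_div_iff₀ hh] at hb
      rw [abs_le]; constructor <;> nlinarith
    have h3 : ‖(fun i => h * (α i : ℝ)) - c‖ ≤ ρ / 2 := by
      rw [pi_norm_le_iff_of_nonneg (by linarith)]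
      intro i
      simp only [Pi.sub_apply, Real.norm_eq_abs]
      exact h2 i
    calc ρ / 2 ≤ ρ - ‖(fun i => h * (α i : ℝ)) - c‖ := by linarith
    _ ≤ φ0 α := by simp only [hφ0def]; exact le_max_left _ _
  -- cardinality comparison between box and T
  have hcard1 : ∀ i : Fin N, (1:ℝ) ≤ ((Finset.Icc (A' i) (B' i)).card : ℝ) ∧
      ((Finset.Icc (A i) (B i)).card : ℝ) ≤ 5 * ((Finset.Icc (A' i) (B' i)).card : ℝ) := by
    intro i
    have hqp2 : (c i + ρ) / h - (c i - ρ) / h = 2 * L := by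
      rw [div_sub_div_same, hLdef]; ring
    have hqp1 : (c i + ρ / 2) / h - (c i - ρ / 2) / h = L := by
      rw [div_sub_div_same, hLdef]; ring
    have houter : ((Finset.Icc (A i) (B i)).card : ℝ) ≤ 2 * L + 1 := by
      have hx := auxOuterCard ((c i - ρ) / h) ((c i + ρ) / h) (by rw [hqp2]; linarith)
      rw [hqp2] at hx
      simp only [hAdef, hBdef]
      linarith
    have hinner := auxInnerCard ((c i - ρ / 2) / h) ((c i + ρ / 2) / h) (by rw [hqp1]; linarith)
    rw [hqp1] at hinner
    simp only [hA'def, hB'def]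
    exact ⟨hinner.2, by linarith [hinner.1, hinner.2]⟩
  have hboxcard : ((box.card : ℝ)) ≤ 5 ^ N * (T.card : ℝ) := by
    rw [hboxdef, hTdef, Pi.card_Icc, Pi.card_Icc]
    push_cast
    calc (∏ i : Fin N, ((Finset.Icc (A i) (B i)).card : ℝ))
        ≤ ∏ i : Fin N, (5 * ((Finset.Icc (A' i) (B' i)).card : ℝ)) := by
          apply Finset.prod_le_prod
          · intro i _; positivity
          · intro i _; exact (hcard1 i).2
      _ = 5 ^ N * ∏ i : Fin N, ((Finset.Icc (A' i) (B' i)).card : ℝ) := by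
          rw [Finset.prod_mul_distrib, Finset.prod_const, Finset.card_univ, Fintype.card_fin]
  have hTcard : (1:ℝ) ≤ (T.card : ℝ) := by
    rw [hTdef, Pi.card_Icc]
    push_cast
    calc (1:ℝ) = ∏ _i : Fin N, (1:ℝ) := by simp
    _ ≤ ∏ i : Fin N, ((Finset.Icc (A' i) (B' i)).card : ℝ) := by
        apply Finset.prod_le_prod
        · intro i _; norm_num
        · intro i _; exact (hcard1 i).1
  -- normalization constant
  set S : ℝ := ∑ α ∈ box, φ0 α ^ 2 with hSdef
  clear_value S
  have hsum2 : Summable (fun α => φ0 α ^ 2) :=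
    summable_of_ne_finset_zero (s := box) (fun b hb => by rw [hsupp b hb]; ring)
  have htsum2 : ∑' α, φ0 α ^ 2 = S := by
    rw [hSdef]
    exact tsum_eq_sum (fun b hb => by rw [hsupp b hb]; ring)
  have hTS : (T.card : ℝ) * (ρ / 2) ^ 2 ≤ S := by
    calc (T.card : ℝ) * (ρ / 2) ^ 2 = ∑ _α ∈ T, (ρ / 2) ^ 2 := by
          rw [Finset.sum_const, nsmul_eq_mul]
      _ ≤ ∑ α ∈ T, φ0 α ^ 2 :=
          Finset.sum_le_sum (fun α hα => pow_le_pow_left₀ (by linarith) (hT α hα) 2)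
      _ ≤ ∑' α, φ0 α ^ 2 := Summable.sum_le_tsum T (fun α _ => sq_nonneg _) hsum2
      _ = S := htsum2
  have hSpos : 0 < S := lt_of_lt_of_le (by nlinarith) hTS
  set K : ℝ := h ^ N * S with hKdef
  clear_value K
  have hK : 0 < K := by rw [hKdef]; exact mul_pos (by positivity) hSpos
  have hsqK : Real.sqrt K ^ 2 = K := Real.sq_sqrt hK.le
  set φ : (Fin N → ℤ) → ℝ := fun α => φ0 α / Real.sqrt K with hφdef
  clear_value φ
  -- shifted sums of W
  have hcompL : ∀ α : Fin N → ℤ, (fun β : Fin N → ℤ => W (α - β)) = W ∘ ⇑(Equiv.subLeft α) := by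
    intro α; funext β; simp [Equiv.subLeft]
  have hcompR : ∀ β : Fin N → ℤ, (fun α : Fin N → ℤ => W (α - β)) = W ∘ ⇑(Equiv.subRight β) := by
    intro β; funext α; simp [Equiv.subRight]
  have hWshiftL : ∀ α : Fin N → ℤ, Summable (fun β => W (α - β)) := by
    intro α
    rw [hcompL α]
    exact (Equiv.subLeft α).summable_iff.mpr hWsum
  have htsumL : ∀ α : Fin N → ℤ, ∑' β, W (α - β) = M2 := by
    intro α
    rw [hM2def, hcompL α]
    exact (Equiv.subLeft α).tsum_eq W
  have hWshiftR : ∀ β : Fin N → ℤ, Summable (fun α => W (α - β)) := by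
    intro β
    rw [hcompR β]
    exact (Equiv.subRight β).summable_iff.mpr hWsum
  have htsumR : ∀ β : Fin N → ℤ, ∑' α, W (α - β) = M2 := by
    intro β
    rw [hM2def, hcompR β]
    exact (Equiv.subRight β).tsum_eq W
  -- pointwise estimates on the Dirichlet form
  set F : (Fin N → ℤ) → (Fin N → ℤ) → ℝ := fun α β => (φ0 α - φ0 β) ^ 2 * ω (α - β) with hFdef
  clear_value F
  have hFnn : ∀ α β, 0 ≤ F α β := by
    intro α β
    simp only [hFdef]
    exact mul_nonneg (sq_nonneg _) (hnn _)
  have hnormsq : ∀ v : Fin N → ℝ, ‖v‖ ^ 2 ≤ ∑ i, v i ^ 2 := by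
    intro v
    have h1 : ‖v‖ ≤ Real.sqrt (∑ i, v i ^ 2) := by
      rw [pi_norm_le_iff_of_nonneg (Real.sqrt_nonneg _)]
      intro i
      rw [Real.norm_eq_abs, ← Real.sqrt_sq_eq_abs]
      exact Real.sqrt_le_sqrt (Finset.single_le_sum (fun j _ => sq_nonneg (v j)) (Finset.mem_univ i))
    calc ‖v‖ ^ 2 ≤ Real.sqrt (∑ i, v i ^ 2) ^ 2 := pow_le_pow_left₀ (norm_nonneg _) h1 2
    _ = ∑ i, v i ^ 2 := Real.sq_sqrt (Finset.sum_nonneg fun i _ => sq_nonneg _)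
  have hFW : ∀ α β, F α β ≤ W (α - β) := by
    intro α β
    set vα : Fin N → ℝ := (fun i => h * (α i : ℝ)) - c with hvα
    set vβ : Fin N → ℝ := (fun i => h * (β i : ℝ)) - c with hvβ
    have hφ0α : φ0 α = max (ρ - ‖vα‖) 0 := by simp only [hφ0def, hvα]
    have hφ0β : φ0 β = max (ρ - ‖vβ‖) 0 := by simp only [hφ0def, hvβ]
    have hlip : |φ0 α - φ0 β| ≤ ‖vα - vβ‖ := by
      have h1 : |φ0 α - φ0 β| ≤ |(ρ - ‖vα‖) - (ρ - ‖vβ‖)| := by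
        rw [hφ0α, hφ0β]
        exact abs_max_sub_max_le_abs (ρ - ‖vα‖) (ρ - ‖vβ‖) 0
      have h2 : |(ρ - ‖vα‖) - (ρ - ‖vβ‖)| = |‖vβ‖ - ‖vα‖| := by
        have he : (ρ - ‖vα‖) - (ρ - ‖vβ‖) = ‖vβ‖ - ‖vα‖ := by ring
        rw [he]
      have h3 : |‖vβ‖ - ‖vα‖| ≤ ‖vβ - vα‖ := abs_norm_sub_norm_le _ _
      have h4 : ‖vβ - vα‖ = ‖vα - vβ‖ := norm_sub_rev _ _
      calc |φ0 α - φ0 β| ≤ |(ρ - ‖vα‖) - (ρ - ‖vβ‖)| := h1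
      _ = |‖vβ‖ - ‖vα‖| := h2
      _ ≤ ‖vβ - vα‖ := h3
      _ = ‖vα - vβ‖ := h4
    have hveq : ∑ i, (vα - vβ) i ^ 2 = ∑ i, (h * ((α - β) i : ℝ)) ^ 2 := by
      apply Finset.sum_congr rfl
      intro i _
      simp only [hvα, hvβ, Pi.sub_apply]
      push_cast
      ring
    have hsq : (φ0 α - φ0 β) ^ 2 ≤ ∑ i, (h * ((α - β) i : ℝ)) ^ 2 := by
      calc (φ0 α - φ0 β) ^ 2 = |φ0 α - φ0 β| ^ 2 := (sq_abs _).symm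
      _ ≤ ‖vα - vβ‖ ^ 2 := pow_le_pow_left₀ (abs_nonneg _) hlip 2
      _ ≤ ∑ i, (vα - vβ) i ^ 2 := hnormsq _
      _ = ∑ i, (h * ((α - β) i : ℝ)) ^ 2 := hveq
    calc F α β = (φ0 α - φ0 β) ^ 2 * ω (α - β) := by simp only [hFdef]
    _ ≤ (∑ i, (h * ((α - β) i : ℝ)) ^ 2) * ω (α - β) :=
        mul_le_mul_of_nonneg_right hsq (hnn _)
    _ = W (α - β) := by simp only [hWdef]; ring
  -- comparison functions
  set G1 : (Fin N → ℤ) → (Fin N → ℤ) → ℝ := fun α β => if α ∈ box then W (α - β) else 0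
    with hG1def
  clear_value G1
  set G2 : (Fin N → ℤ) → (Fin N → ℤ) → ℝ := fun α β => if β ∈ box then W (α - β) else 0
    with hG2def
  clear_value G2
  have hFle : ∀ α β, F α β ≤ G1 α β + G2 α β := by
    intro α β
    by_cases hα : α ∈ box <;> by_cases hβ : β ∈ box
    · simp only [hG1def, hG2def, if_pos hα, if_pos hβ]
      linarith [hFW α β, hW0 (α - β)]
    · simp only [hG1def, hG2def, if_pos hα, if_neg hβ, add_zero]
      exact hFW α β
    · simp only [hG1def, hG2def, if_neg hα, if_pos hβ, zero_add]
      exact hFW α β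
    · simp only [hG1def, hG2def, if_neg hα, if_neg hβ, add_zero]
      simp only [hFdef, hsupp α hα, hsupp β hβ, sub_zero]
      norm_num
  have hG1sum : ∀ α, Summable (fun β => G1 α β) := by
    intro α
    by_cases hα : α ∈ box
    · simpa only [hG1def, if_pos hα] using hWshiftL α
    · simp only [hG1def, if_neg hα]
      exact summable_zero
  have hG2sum : ∀ α, Summable (fun β => G2 α β) := by
    intro α
    exact summable_of_ne_finset_zero (s := box) (fun b hb => by simp only [hG2def, if_neg hb])
  have hFsum : ∀ α, Summable (fun β => F α β) := by
    intro α
    exact Summable.of_nonneg_of_le (hFnn α) (hFle α) ((hG1sum α).add (hG2sum α))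
  set H : (Fin N → ℤ) → ℝ := fun α => (if α ∈ box then M2 else 0) + ∑ β ∈ box, W (α - β)
    with hHdef
  clear_value H
  have hinner : ∀ α, ∑' β, F α β ≤ H α := by
    intro α
    have h1 : ∑' β, F α β ≤ ∑' β, (G1 α β + G2 α β) :=
      Summable.tsum_le_tsum (hFle α) (hFsum α) ((hG1sum α).add (hG2sum α))
    have h2 : ∑' β, (G1 α β + G2 α β) = (∑' β, G1 α β) + ∑' β, G2 α β :=
      Summable.tsum_add (hG1sum α) (hG2sum α)
    have h3 : ∑' β, G1 α β = (if α ∈ box then M2 else 0) := by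
      by_cases hα : α ∈ box
      · simp only [hG1def, if_pos hα]
        exact htsumL α
      · simp only [hG1def, if_neg hα]
        exact tsum_zero
    have h4 : ∑' β, G2 α β = ∑ β ∈ box, W (α - β) := by
      rw [tsum_eq_sum (s := box) (fun b hb => by simp only [hG2def, if_neg hb])]
      apply Finset.sum_congr rfl
      intro b hb
      simp only [hG2def, if_pos hb]
    simp only [hHdef]
    calc ∑' β, F α β ≤ ∑' β, (G1 α β + G2 α β) := h1
    _ = (∑' β, G1 α β) + ∑' β, G2 α β := h2
    _ = (if α ∈ box then M2 else 0) + ∑ β ∈ box, W (α - β) := by rw [h3, h4]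
  have hH1sum : Summable (fun α : Fin N → ℤ => if α ∈ box then M2 else 0) :=
    summable_of_ne_finset_zero (s := box) (fun b hb => by simp only [if_neg hb])
  have hH2sum : Summable (fun α : Fin N → ℤ => ∑ β ∈ box, W (α - β)) :=
    summable_sum (fun β _ => hWshiftR β)
  have hHsum : Summable H := by
    simp only [hHdef]
    exact hH1sum.add hH2sum
  have houter : Summable (fun α => ∑' β, F α β) :=
    Summable.of_nonneg_of_le (fun α => tsum_nonneg (hFnn α)) hinner hHsum
  have hD : ∑' α, ∑' β, F α β ≤ 2 * (box.card : ℝ) * M2 := by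
    have h1 : ∑' α, ∑' β, F α β ≤ ∑' α, H α := Summable.tsum_le_tsum hinner houter hHsum
    have h2 : ∑' α, H α = (∑' α : Fin N → ℤ, if α ∈ box then M2 else 0) +
        ∑' α : Fin N → ℤ, ∑ β ∈ box, W (α - β) := by
      simp only [hHdef]
      exact Summable.tsum_add hH1sum hH2sum
    have h3 : (∑' α : Fin N → ℤ, if α ∈ box then M2 else 0) = (box.card : ℝ) * M2 := by
      rw [tsum_eq_sum (s := box) (fun b hb => by simp only [if_neg hb])]
      rw [Finset.sum_congr rfl (fun b hb => if_pos hb), Finset.sum_const, nsmul_eq_mul]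
    have h4 : (∑' α : Fin N → ℤ, ∑ β ∈ box, W (α - β)) = (box.card : ℝ) * M2 := by
      rw [Summable.tsum_finsetSum (fun β _ => hWshiftR β)]
      rw [Finset.sum_congr rfl (fun b _ => htsumR b), Finset.sum_const, nsmul_eq_mul]
    rw [h2, h3, h4] at h1
    linarith
  -- the candidate Rayleigh quotient value
  have hmemset : (h ^ N / 2 *
      ∑' α : Fin N → ℤ, ∑' β : Fin N → ℤ, (φ α - φ β) ^ 2 * ω (α - β)) ∈
      {r : ℝ | ∃ ψ : (Fin N → ℤ) → ℝ, (Function.support ψ).Finite ∧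
        (∀ α : Fin N → ℤ, (fun k => h * α k) ∉ R • Ω → ψ α = 0) ∧
        h ^ N * ∑' α : Fin N → ℤ, (ψ α) ^ 2 = 1 ∧
        r = h ^ N / 2 *
            ∑' α : Fin N → ℤ, ∑' β : Fin N → ℤ, (ψ α - ψ β) ^ 2 * ω (α - β)} := by
    refine ⟨φ, ?_, ?_, ?_, rfl⟩
    · apply Set.Finite.subset box.finite_toSet
      intro α hα
      rw [Function.mem_support] at hα
      apply hmem α
      intro h0
      apply hα
      simp only [hφdef, h0, zero_div]
    · intro α hα
      by_contra hφne
      apply hα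
      have hφ0ne : φ0 α ≠ 0 := by
        intro h0
        apply hφne
        simp only [hφdef, h0, zero_div]
      have h1 : ‖(fun i => h * (α i : ℝ)) - c‖ < ρ := by
        by_contra hcon
        push_neg at hcon
        apply hφ0ne
        simp only [hφ0def]
        exact max_eq_right (by linarith)
      have h2 : (fun k => h * (α k : ℝ)) ∈ Metric.ball (R • x0) (‖R‖ * r) := by
        rw [Metric.mem_ball, dist_eq_norm, Real.norm_of_nonneg hRpos.le]
        have heq : (fun k => h * (α k : ℝ)) - R • x0 = (fun i => h * (α i : ℝ)) - c := by
          funext i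
          simp only [Pi.sub_apply, Pi.smul_apply, smul_eq_mul, hcdef]
        rw [heq, ← hρdef]
        exact h1
      rw [← _root_.smul_ball (ne_of_gt hRpos) x0 r] at h2
      exact Set.smul_set_mono hball h2
    · have e1 : ∀ α, (φ α) ^ 2 = φ0 α ^ 2 / K := by
        intro α
        simp only [hφdef]
        rw [div_pow, hsqK]
      rw [tsum_congr e1, tsum_div_const, htsum2, hKdef]
      have hhN : (h:ℝ) ^ N ≠ 0 := by positivity
      have hSne : S ≠ 0 := ne_of_gt hSpos
      field_simp
  have hlamle := (hlam R hRpos).2 hmemset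
  -- now estimate the Rayleigh quotient
  have heval : (h ^ N / 2 *
      ∑' α : Fin N → ℤ, ∑' β : Fin N → ℤ, (φ α - φ β) ^ 2 * ω (α - β)) =
      (∑' α, ∑' β, F α β) / (2 * S) := by
    have e1 : ∀ α β : Fin N → ℤ, (φ α - φ β) ^ 2 * ω (α - β) = F α β / K := by
      intro α β
      simp only [hφdef, hFdef]
      rw [div_sub_div_same, div_pow, hsqK]
      ring
    have e2 : ∀ α : Fin N → ℤ, (∑' β, (φ α - φ β) ^ 2 * ω (α - β)) = (∑' β, F α β) / K := by
      intro α
      rw [tsum_congr (e1 α), tsum_div_const]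
    rw [tsum_congr e2, tsum_div_const]
    have hhN : (h:ℝ) ^ N ≠ 0 := by positivity
    have hSne : S ≠ 0 := ne_of_gt hSpos
    have hgen : ∀ D : ℝ, h ^ N / 2 * (D / K) = D / (2 * S) := by
      intro D
      rw [hKdef]
      field_simp
    exact hgen _
  rw [heval] at hlamle
  have hfinal : (∑' α, ∑' β, F α β) / (2 * S) ≤
      4 * 5 ^ N / r ^ 2 * M2 / R ^ 2 := by
    have hDnn : 0 ≤ ∑' α, ∑' β, F α β := tsum_nonneg (fun α => tsum_nonneg (hFnn α))
    have step1 : (∑' α, ∑' β, F α β) / (2 * S) ≤ (2 * (box.card : ℝ) * M2) / (2 * S) := by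
      apply div_le_div_of_nonneg_right hD (by linarith)
    have step2 : (2 * (box.card : ℝ) * M2) / (2 * S) = (box.card : ℝ) * M2 / S := by
      have hSne : S ≠ 0 := ne_of_gt hSpos
      field_simp
    have step3 : (box.card : ℝ) * M2 / S ≤ (box.card : ℝ) * M2 / ((T.card : ℝ) * (ρ / 2) ^ 2) := by
      apply div_le_div_of_nonneg_left (mul_nonneg (Nat.cast_nonneg _) hM2nn) (by nlinarith) hTS
    have step4 : (box.card : ℝ) * M2 / ((T.card : ℝ) * (ρ / 2) ^ 2) ≤
        (5 ^ N * (T.card : ℝ)) * M2 / ((T.card : ℝ) * (ρ / 2) ^ 2) := by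
      apply div_le_div_of_nonneg_right _ (by nlinarith)
      exact mul_le_mul_of_nonneg_right hboxcard hM2nn
    have step5 : (5 ^ N * (T.card : ℝ)) * M2 / ((T.card : ℝ) * (ρ / 2) ^ 2) =
        4 * 5 ^ N / r ^ 2 * M2 / R ^ 2 := by
      have hTne : (T.card : ℝ) ≠ 0 := by linarith
      have hrne : r ≠ 0 := ne_of_gt hr
      have hRne : R ≠ 0 := ne_of_gt hRpos
      rw [hρdef]
      field_simp
      ring
    calc (∑' α, ∑' β, F α β) / (2 * S) ≤ (2 * (box.card : ℝ) * M2) / (2 * S) := step1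
    _ = (box.card : ℝ) * M2 / S := step2
    _ ≤ (box.card : ℝ) * M2 / ((T.card : ℝ) * (ρ / 2) ^ 2) := step3
    _ ≤ (5 ^ N * (T.card : ℝ)) * M2 / ((T.card : ℝ) * (ρ / 2) ^ 2) := step4
    _ = 4 * 5 ^ N / r ^ 2 * M2 / R ^ 2 := step5
  exact le_trans hlamle hfinal
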